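/- Let N ≥ 2 be an integer and ℓ : ℝ → ℝ twice continuously differentiable. Define F : ℝ^N → ℝ^N by F(y)_i := ℓ(avg(y)) + (1/N)·y_i·ℓ'(avg(y)), where avg(y) := (1/N)Σ_j y_j. Then the Jacobian matrix DF(y) is symmetric for every y ∈ ℝ^N if and only if ℓ'' ≡ 0, i.e., ℓ is affine. -/

import Mathlib

open scoped BigOperators

lemma key (N : ℕ) (hN : 0 < N) (ℓ : ℝ → ℝ) (hC2 : ContDiff ℝ 2 ℓ)
    (y : Fin N → ℝ) (i j : Fin N) :
    fderiv ℝ (fun z : Fin N → ℝ =>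
        ℓ ((∑ l, z l) / N) + (1 / N) * z i * deriv ℓ ((∑ l, z l) / N)) y
      (Pi.single j 1)
    = deriv ℓ ((∑ l, y l) / N) / N
      + (1 / N) * y i * (deriv (deriv ℓ) ((∑ l, y l) / N) / N)
      + (if i = j then 1 else 0) * ((1 / N) * deriv ℓ ((∑ l, y l) / N)) := by
  have hN' : (N : ℝ) ≠ 0 := Nat.cast_ne_zero.mpr hN.ne'
  set s : ℝ := (∑ l, y l) / N with hs
  set L : (Fin N → ℝ) →L[ℝ] ℝ :=
    (N : ℝ)⁻¹ • (∑ l, ContinuousLinearMap.proj (R := ℝ) (φ := fun _ : Fin N => ℝ) l) with hL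
  have hLapp : ∀ z : Fin N → ℝ, L z = (∑ l, z l) / N := by
    intro z
    simp [hL, ContinuousLinearMap.sum_apply, div_eq_inv_mul]
  have havg : HasFDerivAt (fun z : Fin N → ℝ => (∑ l, z l) / (N : ℝ)) L y := by
    have := L.hasFDerivAt (x := y)
    exact this.congr_of_eventuallyEq (Filter.Eventually.of_forall fun z => (hLapp z).symm)
  have hdℓ : Differentiable ℝ ℓ := hC2.differentiable two_ne_zero
  have hdℓ' : Differentiable ℝ (deriv ℓ) := by
    have h : ContDiff ℝ ((1 : ℕ) + 1) ℓ := by exact_mod_cast hC2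
    exact ((contDiff_succ_iff_deriv.mp h).2.2).differentiable (by norm_num)
  have h1 : HasFDerivAt (fun z : Fin N → ℝ => ℓ ((∑ l, z l) / N)) (deriv ℓ s • L) y :=
    (hdℓ.differentiableAt.hasDerivAt).comp_hasFDerivAt y havg
  have h2 : HasFDerivAt (fun z : Fin N → ℝ => deriv ℓ ((∑ l, z l) / N))
      (deriv (deriv ℓ) s • L) y :=
    (hdℓ'.differentiableAt.hasDerivAt).comp_hasFDerivAt y havg
  have h3 : HasFDerivAt (fun z : Fin N → ℝ => (1 / (N : ℝ)) * z i)
      ((1 / (N : ℝ)) • ContinuousLinearMap.proj (R := ℝ) (φ := fun _ : Fin N => ℝ) i) y := by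
    exact ((ContinuousLinearMap.proj (R := ℝ) (φ := fun _ : Fin N => ℝ) i).hasFDerivAt).const_smul
      (1 / (N : ℝ)) |>.congr_of_eventuallyEq (Filter.Eventually.of_forall fun z => by
        simp [smul_eq_mul])
  have h4 := (h3.mul h2)
  have h5 : HasFDerivAt (fun z : Fin N → ℝ =>
      ℓ ((∑ l, z l) / N) + (1 / N) * z i * deriv ℓ ((∑ l, z l) / N)) _ y := h1.add h4
  rw [h5.fderiv]
  have hproj : (ContinuousLinearMap.proj (R := ℝ) (φ := fun _ : Fin N => ℝ) i)
      (Pi.single j 1) = if i = j then 1 else 0 := by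
    simp [Pi.single_apply]
  have hLs : L (Pi.single j 1) = 1 / N := by
    rw [hLapp]; simp [Finset.sum_pi_single']
  simp only [ContinuousLinearMap.add_apply, ContinuousLinearMap.smul_apply, hLs, hproj,
    smul_eq_mul]
  ring

theorem stmt_14 (N : ℕ) (hN : 2 ≤ N) (ℓ : ℝ → ℝ) (hC2 : ContDiff ℝ 2 ℓ) :
    (∀ y : Fin N → ℝ, ∀ i j : Fin N,
      fderiv ℝ (fun z : Fin N → ℝ =>
          ℓ ((∑ l, z l) / N) + (1 / N) * z i * deriv ℓ ((∑ l, z l) / N)) y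
        (Pi.single j 1)
      = fderiv ℝ (fun z : Fin N → ℝ =>
          ℓ ((∑ l, z l) / N) + (1 / N) * z j * deriv ℓ ((∑ l, z l) / N)) y
        (Pi.single i 1))
    ↔ (∀ x : ℝ, deriv (deriv ℓ) x = 0) := by
  have hN0 : 0 < N := by omega
  have hN' : (N : ℝ) ≠ 0 := Nat.cast_ne_zero.mpr hN0.ne'
  constructor
  · intro h x
    set i0 : Fin N := ⟨0, by omega⟩
    set i1 : Fin N := ⟨1, by omega⟩
    have hne : i0 ≠ i1 := by simp [i0, i1, Fin.ext_iff]
    set y : Fin N → ℝ := fun l => x + (if l = i0 then (1:ℝ) else 0) - (if l = i1 then (1:ℝ) else 0) with hy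
    have hsum : (∑ l, y l) / N = x := by
      have : (∑ l, y l) = N * x := by
        simp [hy, Finset.sum_add_distrib, Finset.sum_sub_distrib,
          Finset.sum_ite_eq', mul_comm]
      rw [this]; field_simp
    have := h y i0 i1
    rw [key N hN0 ℓ hC2 y i0 i1, key N hN0 ℓ hC2 y i1 i0, hsum] at this
    have hy0 : y i0 = x + 1 := by simp [hy, hne]
    have hy1 : y i1 = x - 1 := by simp [hy, hne.symm]
    rw [hy0, hy1, if_neg hne, if_neg hne.symm] at this
    field_simp at this
    linear_combination this / 2
  · intro h y i j
    rw [key N hN0 ℓ hC2 y i j, key N hN0 ℓ hC2 y j i, h]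
    simp [eq_comm]
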